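/- arXiv:2601.12725 — 2 statements merged into one kernel-verified Lean document; each statement's English description precedes it below -/
import Mathlib

section
/- Let M and N_t be positive integers and n = M·N_t, with ℂⁿ identified with the M-fold product of ℂ^{N_t}; for x ∈ ℂⁿ write x_m ∈ ℂ^{N_t} for its m-th block. Let Q be an n×n Hermitian complex matrix, ĥ ∈ ℂⁿ, s ∈ ℝ, and let ε_1, …, ε_M ≥ 0 and λ_1, …, λ_M ≥ 0 be reals, with Λ = blkdiag(λ_1 I_{N_t}, …, λ_M I_{N_t}). If the (n+1)×(n+1) Hermitian block matrix [[Q + Λ, Q ĥ],[ĥᴴ Q, ĥᴴ Q ĥ − s − Σ_{m=1}^{M} λ_m ε_m²]] is positive semidefinite, then for every Δh ∈ ℂⁿ satisfying ‖Δh_m‖ ≤ ε_m for all m = 1, …, M, it holds that (ĥ + Δh)ᴴ Q (ĥ + Δh) ≥ s. -/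
open Matrix
open scoped ComplexOrder

/-- The Euclidean norm of the `m`-th block (of length `Nt`) of a vector indexed by
`Fin M × Fin Nt`. -/
noncomputable def blockNorm {M Nt : ℕ} (x : Fin M × Fin Nt → ℂ) (m : Fin M) : ℝ :=
  ‖(WithLp.equiv 2 (Fin Nt → ℂ)).symm (fun j => x (m, j))‖

/-- Robust quadratic bound from the LMI: if
`[[Q + Λ, Q ĥ],[ĥᴴ Q, ĥᴴ Q ĥ − s − ∑ λ_m ε_m²]] ⪰ 0` with
`Λ = blkdiag(λ_1 I, …, λ_M I)`, then `(ĥ + Δh)ᴴ Q (ĥ + Δh) ≥ s` for all blockwise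
perturbations with `‖Δh_m‖ ≤ ε_m`. -/
theorem robust_quadratic_LMI {M Nt : ℕ} (hM : 0 < M) (hNt : 0 < Nt)
    (Q : Matrix (Fin M × Fin Nt) (Fin M × Fin Nt) ℂ) (hQ : Q.IsHermitian)
    (hhat : Fin M × Fin Nt → ℂ) (s : ℝ)
    (eps lam : Fin M → ℝ) (heps : ∀ m, 0 ≤ eps m) (hlam : ∀ m, 0 ≤ lam m)
    (Lam : Matrix (Fin M × Fin Nt) (Fin M × Fin Nt) ℂ)
    (hLam : Lam = Matrix.diagonal fun p => (lam p.1 : ℂ))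
    (hPSD : (Matrix.fromBlocks (Q + Lam) (Matrix.replicateCol Unit (Q.mulVec hhat))
        (Matrix.replicateRow Unit (star (Q.mulVec hhat)))
        (Matrix.of fun _ _ => (star hhat ⬝ᵥ Q.mulVec hhat) - (s : ℂ) -
          ((∑ m, lam m * (eps m) ^ 2 : ℝ) : ℂ))).PosSemidef) :
    ∀ Δh : Fin M × Fin Nt → ℂ, (∀ m, blockNorm Δh m ≤ eps m) →
      s ≤ (star (hhat + Δh) ⬝ᵥ Q.mulVec (hhat + Δh)).re := by
  intro Δh hΔ
  set c : ℂ := (star hhat ⬝ᵥ Q.mulVec hhat) - (s : ℂ) -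
      ((∑ m, lam m * (eps m) ^ 2 : ℝ) : ℂ) with hc
  -- quadratic form of the big matrix at (Δh, 1)
  have hx := hPSD.dotProduct_mulVec_nonneg (Sum.elim Δh fun _ : Unit => (1:ℂ))
  -- compute it
  have hs : star (Sum.elim Δh fun _ : Unit => (1:ℂ))
      = Sum.elim (star Δh) (fun _ => (1:ℂ)) := by
    funext i; cases i <;> simp
  have hcross : star (Q.mulVec hhat) ⬝ᵥ Δh = star hhat ⬝ᵥ Q.mulVec Δh := by
    rw [star_mulVec, hQ.eq, ← dotProduct_mulVec]
  have key : star (Sum.elim Δh fun _ : Unit => (1:ℂ)) ⬝ᵥ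
      (Matrix.fromBlocks (Q + Lam) (Matrix.replicateCol Unit (Q.mulVec hhat))
        (Matrix.replicateRow Unit (star (Q.mulVec hhat)))
        (Matrix.of fun _ _ => c)).mulVec (Sum.elim Δh fun _ => (1:ℂ))
      = star Δh ⬝ᵥ Q.mulVec Δh + star Δh ⬝ᵥ Lam.mulVec Δh + star Δh ⬝ᵥ Q.mulVec hhat
        + star hhat ⬝ᵥ Q.mulVec Δh + c := by
    rw [hs, fromBlocks_mulVec, sumElim_dotProduct_sumElim]
    simp only [Sum.elim_comp_inl, Sum.elim_comp_inr]
    have h1 : (Matrix.replicateCol Unit (Q.mulVec hhat)).mulVec (fun _ => (1:ℂ)) = Q.mulVec hhat := by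
      funext i; simp [mulVec, dotProduct]
    have h2 : (fun _ : Unit => (1:ℂ)) ⬝ᵥ (Matrix.replicateRow Unit (star (Q.mulVec hhat))).mulVec Δh
        = star (Q.mulVec hhat) ⬝ᵥ Δh := by
      simp [mulVec, dotProduct]
    have h3 : (fun _ : Unit => (1:ℂ)) ⬝ᵥ (Matrix.of fun _ _ : Unit => c).mulVec
        (fun _ => (1:ℂ)) = c := by
      simp [mulVec, dotProduct]
    rw [dotProduct_add, dotProduct_add, h1, h2, h3, hcross, add_mulVec, dotProduct_add]
    ring
  rw [key] at hx
  -- the Lam quadratic term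
  have hLval : star Δh ⬝ᵥ Lam.mulVec Δh
      = ((∑ p, lam p.1 * Complex.normSq (Δh p) : ℝ) : ℂ) := by
    subst hLam
    have : star Δh ⬝ᵥ (Matrix.diagonal fun p : Fin M × Fin Nt => (lam p.1 : ℂ)).mulVec Δh
        = ∑ p, (starRingEnd ℂ) (Δh p) * ((lam p.1 : ℂ) * Δh p) := by
      simp [dotProduct, mulVec_diagonal]
    rw [this]
    push_cast
    refine Finset.sum_congr rfl fun p _ => ?_
    rw [mul_comm ((starRingEnd ℂ) (Δh p)), mul_assoc, Complex.mul_conj]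
  -- bound the Lam quadratic term
  have hsum : (∑ p : Fin M × Fin Nt, lam p.1 * Complex.normSq (Δh p))
      ≤ ∑ m, lam m * (eps m) ^ 2 := by
    rw [Fintype.sum_prod_type]
    refine Finset.sum_le_sum fun m _ => ?_
    have hms : ∑ j, lam (m, j).1 * Complex.normSq (Δh (m, j))
        = lam m * ∑ j, Complex.normSq (Δh (m, j)) := by
      simp [Finset.mul_sum]
    rw [hms]
    refine mul_le_mul_of_nonneg_left ?_ (hlam m)
    have hb : blockNorm Δh m = Real.sqrt (∑ j, ‖Δh (m, j)‖ ^ 2) := by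
      rw [blockNorm, EuclideanSpace.norm_eq]; simp
    have hS : 0 ≤ ∑ j, ‖Δh (m, j)‖ ^ 2 :=
      Finset.sum_nonneg fun j _ => sq_nonneg _
    have h1 : ∑ j, Complex.normSq (Δh (m, j)) = ∑ j, ‖Δh (m, j)‖ ^ 2 := by
      refine Finset.sum_congr rfl fun j _ => ?_
      simp [← Complex.sq_norm]
    rw [h1]
    calc ∑ j, ‖Δh (m, j)‖ ^ 2 = Real.sqrt (∑ j, ‖Δh (m, j)‖ ^ 2) ^ 2 :=
          (Real.sq_sqrt hS).symm
      _ ≤ (eps m) ^ 2 := by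
          refine pow_le_pow_left₀ (Real.sqrt_nonneg _) ?_ 2
          rw [← hb]; exact hΔ m
  -- take real parts
  rw [Complex.le_def] at hx
  have hre := hx.1
  have hexp : (star (hhat + Δh) ⬝ᵥ Q.mulVec (hhat + Δh))
      = star Δh ⬝ᵥ Q.mulVec Δh + star Δh ⬝ᵥ Q.mulVec hhat
        + star hhat ⬝ᵥ Q.mulVec Δh + star hhat ⬝ᵥ Q.mulVec hhat := by
    rw [star_add, mulVec_add, add_dotProduct, dotProduct_add, dotProduct_add]
    ring
  rw [hexp]
  simp only [hc, hLval, Complex.add_re, Complex.sub_re, Complex.ofReal_re,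
    Complex.zero_re] at hre ⊢
  linarith
end

section
/- Let W, B, and Λ be n×n Hermitian complex matrices with W positive semidefinite, let ĥ ∈ ℂⁿ, let s ∈ ℝ, and for γ > 0 define M(γ) = (1/γ)·W − B and the (n+1)×(n+1) Hermitian block matrix L(γ) = [[M(γ) + Λ, M(γ) ĥ],[ĥᴴ M(γ), ĥᴴ M(γ) ĥ − s]]. If 0 < γ' ≤ γ and L(γ) is positive semidefinite, then L(γ') is positive semidefinite. -/
open Matrix
open scoped ComplexOrder

/-- The LMI block matrix `L(γ) = [[M(γ)+Λ, M(γ)ĥ],[ĥᴴM(γ), ĥᴴM(γ)ĥ − s]]`, where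
`M(γ) = (1/γ)W − B`. -/
noncomputable def robustLMI {n : ℕ} (W B Lam : Matrix (Fin n) (Fin n) ℂ)
    (hhat : Fin n → ℂ) (s : ℝ) (γ : ℝ) :
    Matrix (Fin n ⊕ Unit) (Fin n ⊕ Unit) ℂ :=
  let Mγ := ((1 / γ : ℝ) : ℂ) • W - B
  Matrix.fromBlocks (Mγ + Lam) (Matrix.replicateCol Unit (Mγ.mulVec hhat))
    (Matrix.replicateRow Unit (star (Mγ.mulVec hhat)))
    (Matrix.of fun _ _ => (star hhat ⬝ᵥ Mγ.mulVec hhat) - (s : ℂ))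

/-- Sum of PSD matrices is PSD. -/
lemma psd_add {m : Type*} [Fintype m] {A B : Matrix m m ℂ}
    (hA : A.PosSemidef) (hB : B.PosSemidef) : (A + B).PosSemidef := by
  refine posSemidef_iff_dotProduct_mulVec.mpr ⟨hA.1.add hB.1, fun x => ?_⟩
  simpa [add_mulVec, dotProduct_add] using add_nonneg (hA.dotProduct_mulVec_nonneg x) (hB.dotProduct_mulVec_nonneg x)

/-- Nonnegative real scalar multiple of a PSD matrix is PSD. -/
lemma psd_smul {m : Type*} [Fintype m] {A : Matrix m m ℂ} (c : ℝ) (hc : 0 ≤ c)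
    (hA : A.PosSemidef) : ((c : ℂ) • A).PosSemidef := by
  refine posSemidef_iff_dotProduct_mulVec.mpr ⟨?_, fun x => ?_⟩
  · unfold Matrix.IsHermitian
    rw [conjTranspose_smul, hA.1]
    simp
  · rw [smul_mulVec, dotProduct_smul]
    exact mul_nonneg (by exact_mod_cast hc) (hA.dotProduct_mulVec_nonneg x)

/-- Monotonicity of the robust LMI in the SINR threshold `γ`: if `0 < γ' ≤ γ` and
`L(γ) ⪰ 0`, then `L(γ') ⪰ 0`. -/
theorem robustLMI_mono {n : ℕ} (W B Lam : Matrix (Fin n) (Fin n) ℂ)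
    (hW : W.PosSemidef) (hB : B.IsHermitian) (hLam : Lam.IsHermitian)
    (hhat : Fin n → ℂ) (s : ℝ) (γ γ' : ℝ) (hγ' : 0 < γ') (hγ : γ' ≤ γ)
    (hPSD : (robustLMI W B Lam hhat s γ).PosSemidef) :
    (robustLMI W B Lam hhat s γ').PosSemidef := by
  set c : ℝ := 1 / γ' - 1 / γ with hcdef
  have hc : 0 ≤ c := by
    have : 1 / γ ≤ 1 / γ' := one_div_le_one_div_of_le hγ' hγ
    rw [hcdef]; linarith
  set K : Matrix (Fin n) (Fin n ⊕ Unit) ℂ :=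
    fromCols 1 (Matrix.replicateCol Unit hhat) with hKdef
  have hK : (Kᴴ * W * K).PosSemidef := hW.conjTranspose_mul_mul_same K
  have hKWK : Kᴴ * W * K =
      Matrix.fromBlocks W (Matrix.replicateCol Unit (W.mulVec hhat))
        (Matrix.replicateRow Unit (star (W.mulVec hhat)))
        (Matrix.of fun _ _ => star hhat ⬝ᵥ W.mulVec hhat) := by
    have hstar : star (W *ᵥ hhat) = star hhat ᵥ* W := by rw [star_mulVec, hW.1]
    rw [hKdef, conjTranspose_fromCols_eq_fromRows_conjTranspose, conjTranspose_replicateCol,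
      conjTranspose_one, fromRows_mul, fromRows_mul_fromCols, Matrix.one_mul,
      Matrix.mul_one, Matrix.mul_one, ← replicateCol_mulVec, hstar, ← replicateRow_vecMul, replicateRow_mul_replicateCol]
    congr 1
    ext i j
    simp [dotProduct_mulVec]
  -- key matrix identity
  have hM : ((1 / γ' : ℝ) : ℂ) • W - B =
      (((1 / γ : ℝ) : ℂ) • W - B) + (c : ℂ) • W := by
    have : ((1 / γ' : ℝ) : ℂ) = ((1 / γ : ℝ) : ℂ) + (c : ℂ) := by
      push_cast [hcdef]; ring
    rw [this, add_smul]; abel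
  have hEq : robustLMI W B Lam hhat s γ' =
      robustLMI W B Lam hhat s γ + (c : ℂ) • (Kᴴ * W * K) := by
    rw [hKWK]
    ext (i | i) (j | j) <;>
      simp [robustLMI, hM, add_mulVec, smul_mulVec, dotProduct_add,
        dotProduct_smul, Matrix.add_apply, Matrix.smul_apply, sub_mulVec,
        Complex.ofReal_sub, Complex.ofReal_inv, hcdef] <;> ring
  rw [hEq]
  exact psd_add hPSD (psd_smul c hc hK)
end
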